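/- Let m and n be integers with m ≥ 1 and n ≥ 1, and set α(i) = 1/2 if i = 0 and α(i) = 1 otherwise. Then, as an identity of rational numbers, ∑_{i=0}^{n} ∑_{j=0}^{m} α(i)·α(j)·|j² − i²| · C(2n, n+i) · C(2m, m+j) = (nm/2)·C(2n,n)·C(2m,m) + 2·(m − n) · ∑_{j=1}^{n+m} ∑_{i=0}^{j−1} α(i) · ( C(2n, n+i)·C(2m−2, m+j−1) − C(2n−2, n+j−1)·C(2m, m+i) ), where m − n is taken in ℚ (it may be negative), and the range j ≤ n+m covers all nonzero terms since the binomial coefficients vanish beyond it. -/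

import Mathlib

/-- The weight `α(i)`, equal to `1/2` if `i = 0` and to `1` otherwise. -/
def alphaWeight (i : ℕ) : ℚ := if i = 0 then 1 / 2 else 1

namespace KSaux

open Finset

def ro (p i : ℕ) : ℚ := ((2*p).choose (p+i) : ℚ)
def hf (p i : ℕ) : ℚ := ((2*p-1).choose (p+i) : ℚ)
def rp (p i : ℕ) : ℚ := ((2*p-2).choose (p-1+i) : ℚ)

lemma ro_vanish (p i : ℕ) (h : p + 1 ≤ i) : ro p i = 0 := by
  unfold ro; rw [Nat.choose_eq_zero_of_lt (by omega)]; norm_num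

lemma hf_vanish (p i : ℕ) (hp : 1 ≤ p) (h : p ≤ i) : hf p i = 0 := by
  unfold hf; rw [Nat.choose_eq_zero_of_lt (by omega)]; norm_num

lemma rp_vanish (p i : ℕ) (hp : 1 ≤ p) (h : p ≤ i) : rp p i = 0 := by
  unfold rp; rw [Nat.choose_eq_zero_of_lt (by omega)]; norm_num

lemma pasc (A B a b : ℕ) (hA : A = a + 1) (hB : B = b + 1) :
    A.choose B = a.choose b + a.choose (b+1) := by
  subst hA; subst hB; exact Nat.choose_succ_succ' a b

lemma cc (a b b' : ℕ) (hb : b = b') : (a.choose b : ℚ) = (a.choose b' : ℚ) := by subst hb; rfl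

lemma ro_succ (p i : ℕ) (hp : 1 ≤ p) : ro p (i+1) = hf p i + hf p (i+1) := by
  unfold ro hf
  rw [pasc (2*p) (p+(i+1)) (2*p-1) (p+i) (by omega) (by omega)]
  push_cast
  rw [cc (2*p-1) (p+i+1) (p+(i+1)) (by omega)]

lemma ro_zero (p : ℕ) (hp : 1 ≤ p) : ro p 0 = 2 * hf p 0 := by
  unfold ro hf
  rw [pasc (2*p) (p+0) (2*p-1) (p-1) (by omega) (by omega)]
  have h4 : (2*p-1).choose (p-1) = (2*p-1).choose (p+0) := by
    have h : (2*p-1) - (p+0) = p - 1 := by omega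
    rw [← h]; exact Nat.choose_symm (by omega)
  rw [h4]
  push_cast
  rw [cc (2*p-1) (p-1+1) (p+0) (by omega)]
  ring

lemma hf_eq (p i : ℕ) (hp : 1 ≤ p) : hf p i = rp p i + rp p (i+1) := by
  unfold hf rp
  rw [pasc (2*p-1) (p+i) (2*p-2) (p-1+i) (by omega) (by omega)]
  push_cast
  rw [cc (2*p-2) (p-1+i+1) (p-1+(i+1)) (by omega)]

lemma hf_scaled (p i : ℕ) (hp : 1 ≤ p) :
    ((p:ℚ)+i+1) * hf p (i+1) = ((p:ℚ)-1-i) * hf p i := by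
  rcases le_or_gt p i with h | h
  · rw [hf_vanish p i hp h, hf_vanish p (i+1) hp (by omega)]; ring
  · have key := Nat.choose_succ_right_eq (2*p-1) (p+i)
    have hsub : 2*p-1 - (p+i) = p-1-i := by omega
    rw [hsub] at key
    have keyQ := congrArg (fun x : ℕ => (x : ℚ)) key
    push_cast at keyQ
    unfold hf
    rw [cc (2*p-1) (p+(i+1)) (p+i+1) (by omega)]
    have hc : ((p:ℚ) - 1 - i) = ((p - 1 - i : ℕ) : ℚ) := by
      have h1 : i ≤ p - 1 := by omega
      have h2 : (1:ℕ) ≤ p := hp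
      push_cast [Nat.cast_sub h1, Nat.cast_sub h2]
      ring
    rw [hc]
    linear_combination keyQ

lemma K1 (p i : ℕ) (hp : 1 ≤ p) :
    ((p:ℚ)^2 - (i:ℚ)^2) * ro p i = 2*(p:ℚ)*(2*(p:ℚ)-1) * rp p i := by
  rcases le_or_gt (p+1) i with h | h
  · rw [ro_vanish p i h, rp_vanish p i hp (by omega)]; ring
  · -- h1 : (p+i) * C(2p, p+i) = 2p * C(2p-1, p+i-1)
    have h1 : (p+i) * (2*p).choose (p+i) = (2*p) * (2*p-1).choose (p+i-1) := by
      have key := Nat.add_one_mul_choose_eq (2*p-1) (p+i-1)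
      have e1 : (2*p-1)+1 = 2*p := by omega
      have e2 : (p+i-1)+1 = p+i := by omega
      rw [e1, e2] at key
      rw [mul_comm]
      exact key.symm
    -- h2 : (p-i) * C(2p-1, p+i-1) = (2p-1) * C(2p-2, p+i-1)
    have h2 : (p-i) * (2*p-1).choose (p+i-1) = (2*p-1) * (2*p-2).choose (p+i-1) := by
      have key := Nat.add_one_mul_choose_eq (2*p-2) (p+i-1)
      have key2 := Nat.choose_succ_right_eq (2*p-1) (p+i-1)
      -- (2p-1).choose (p+i) * (p+i) = (2p-1).choose (p+i-1) * ((2p-1)-(p+i-1))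
      have e1 : (2*p-2)+1 = 2*p-1 := by omega
      have e2 : (p+i-1)+1 = p+i := by omega
      rw [e1, e2] at key
      -- key : (2p-1) * (2p-2).choose (p+i-1) = (2p-1).choose (p+i) * (p+i)
      have e3 : 2*p-1 - (p+i-1) = p-i := by omega
      rw [e3] at key2
      -- key2 : (2p-1).choose (p+i) * (p+i) = (2p-1).choose (p+i-1) * (p-i)
      have e4 : p + i - 1 + 1 = p + i := by omega
      rw [e4] at key2
      rw [key, key2]; ring
    have h1Q := congrArg (fun x : ℕ => (x : ℚ)) h1
    have h2Q := congrArg (fun x : ℕ => (x : ℚ)) h2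
    push_cast at h1Q h2Q
    have hpi : ((p - i : ℕ) : ℚ) = (p:ℚ) - i := by
      push_cast [Nat.cast_sub (by omega : i ≤ p)]
      ring
    rw [hpi] at h2Q
    unfold ro rp
    rw [cc (2*p-2) (p-1+i) (p+i-1) (by omega)]
    have expand : ((p:ℚ)^2 - (i:ℚ)^2) = ((p:ℚ)+i) * ((p:ℚ)-i) := by ring
    rw [expand]
    calc ((p:ℚ)+i) * ((p:ℚ)-i) * ((2*p).choose (p+i) : ℚ)
        = ((p:ℚ)-i) * (((p:ℚ)+i) * ((2*p).choose (p+i) : ℚ)) := by ring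
      _ = ((p:ℚ)-i) * ((2*p) * ((2*p-1).choose (p+i-1) : ℚ)) := by rw [h1Q]
      _ = (2*(p:ℚ)) * (((p:ℚ)-i) * ((2*p-1).choose (p+i-1) : ℚ)) := by push_cast; ring
      _ = 2*(p:ℚ)*(2*(p:ℚ)-1) * ((2*p-2).choose (p+i-1) : ℚ) := by
          rw [h2Q, Nat.cast_sub (show 1 ≤ 2*p by omega)]
          push_cast; ring


/-! ### generic sum helpers -/

lemma shift_sum (K : ℕ) (f : ℕ → ℚ) :
    ∑ j ∈ range K, f j = (∑ t ∈ range K, f (t+1)) + f 0 - f K := by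
  have h1 := Finset.sum_range_succ' f K
  have h2 := Finset.sum_range_succ f K
  rw [h1] at h2
  linarith

lemma alpha_split (t : ℕ) (f : ℕ → ℚ) :
    ∑ i ∈ range (t+1), alphaWeight i * f i = (∑ i ∈ range (t+1), f i) - f 0 / 2 := by
  have h : ∑ i ∈ range (t+1), (alphaWeight i * f i - f i) = - (f 0) / 2 := by
    rw [Finset.sum_eq_single 0]
    · simp [alphaWeight]; ring
    · intro b _ hb
      simp [alphaWeight, hb]
    · intro habs
      exact absurd (Finset.mem_range.2 (by omega)) habs
  rw [Finset.sum_sub_distrib] at h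
  linarith

lemma pad_sum (K1 K2 : ℕ) (h : K1 ≤ K2) (f : ℕ → ℚ)
    (hz : ∀ i, K1 ≤ i → f i = 0) :
    ∑ i ∈ range K2, f i = ∑ i ∈ range K1, f i := by
  refine (Finset.sum_subset (Finset.range_subset_range.2 h) ?_).symm
  intro x hx hnx
  exact hz x (by simpa using hnx)

lemma square_triangle (K : ℕ) (F : ℕ → ℕ → ℚ) :
    ∑ j ∈ range K, ∑ i ∈ range K, F i j
    = (∑ j ∈ range K, ∑ i ∈ range j, (F i j + F j i)) + ∑ i ∈ range K, F i i := by
  induction K with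
  | zero => simp
  | succ K ih =>
    simp only [Finset.sum_range_succ]
    rw [Finset.sum_add_distrib, ih, Finset.sum_add_distrib]
    ring

/-! ### partial sum identities -/

lemma I1 (p : ℕ) (hp : 1 ≤ p) (t : ℕ) :
    ∑ i ∈ range (t+1), alphaWeight i * ro p i
      = 2 * (∑ i ∈ range (t+1), hf p i) - hf p t := by
  induction t with
  | zero =>
    simp [alphaWeight, ro_zero p hp]
    ring
  | succ t ih =>
    rw [Finset.sum_range_succ, ih, ro_succ p t hp]
    rw [Finset.sum_range_succ (f := fun i => hf p i) (n := t+1)]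
    simp [alphaWeight]
    ring

lemma I2 (p : ℕ) (hp : 1 ≤ p) (t : ℕ) :
    2 * ∑ i ∈ range (t+1), rp p i
      = (∑ i ∈ range (t+1), hf p i) + rp p 0 - rp p (t+1) := by
  induction t with
  | zero =>
    simp [hf_eq p 0 hp]
    ring
  | succ t ih =>
    rw [Finset.sum_range_succ, Finset.sum_range_succ (f := fun i => hf p i) (n := t+1),
      mul_add, ih, hf_eq p (t+1) hp]
    ring


/-! ### Vandermonde -/

lemma vand (r s t : ℕ) :
    (r+s).choose t = ∑ k ∈ range (t+1), r.choose k * s.choose (t-k) := by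
  rw [Nat.add_choose_eq, Finset.Nat.sum_antidiagonal_eq_sum_range_succ_mk]

lemma split_range (a b c : ℕ) (hc : c = a + b) (f : ℕ → ℚ) :
    ∑ k ∈ range c, f k = (∑ k ∈ range a, f k) + ∑ i ∈ range b, f (a+i) := by
  subst hc
  have h2 := Finset.sum_Ico_consecutive f (Nat.zero_le a) (Nat.le_add_right a b)
  have h3 := Finset.sum_Ico_eq_sum_range (f := f) (m := a) (n := a+b)
  have e : a + b - a = b := by omega
  rw [e] at h3
  rw [Finset.range_eq_Ico, ← h2, h3, Finset.range_eq_Ico, Finset.range_eq_Ico]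

/-- L5 : diagonal (hf,hf) sum -/
lemma L5 (n m K : ℕ) (hn : 1 ≤ n) (hm : 1 ≤ m) (hK : n + m ≤ K) :
    2 * ∑ i ∈ range K, hf n i * hf m i = ((2*(n+m)-2).choose (n+m-1) : ℚ) := by
  have base : ((2*(n+m)-2).choose (n+m-1) : ℚ)
      = ∑ k ∈ range (n+m), ((2*n-1).choose k : ℚ) * ((2*m-1).choose (n+m-1-k) : ℚ) := by
    have h := vand (2*n-1) (2*m-1) (n+m-1)
    have e1 : (2*n-1) + (2*m-1) = 2*(n+m)-2 := by omega
    have e2 : (n+m-1)+1 = n+m := by omega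
    rw [e1, e2] at h
    rw [h]
    push_cast
    rfl
  rw [base, split_range n m (n+m) rfl]
  have upper : ∑ i ∈ range m, ((2*n-1).choose (n+i) : ℚ) * ((2*m-1).choose (n+m-1-(n+i)) : ℚ)
      = ∑ i ∈ range K, hf n i * hf m i := by
    rw [pad_sum m K (by omega) (fun i => hf n i * hf m i)
      (fun i hi => by show hf n i * hf m i = 0; rw [hf_vanish m i hm hi]; ring)]
    apply Finset.sum_congr rfl
    intro i hi
    have hi' : i < m := Finset.mem_range.1 hi
    have e1 : (2*m-1).choose (n+m-1-(n+i)) = (2*m-1).choose (m+i) := by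
      have h : (2*m-1) - (m+i) = n+m-1-(n+i) := by omega
      rw [← h, Nat.choose_symm (by omega)]
    rw [e1]
    rfl
  have lower : ∑ k ∈ range n, ((2*n-1).choose k : ℚ) * ((2*m-1).choose (n+m-1-k) : ℚ)
      = ∑ i ∈ range K, hf n i * hf m i := by
    rw [← Finset.sum_range_reflect]
    rw [pad_sum n K (by omega) (fun i => hf n i * hf m i)
      (fun i hi => by show hf n i * hf m i = 0; rw [hf_vanish n i hn (by omega)]; ring)]
    apply Finset.sum_congr rfl
    intro i hi
    have hi' : i < n := Finset.mem_range.1 hi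
    have e1 : (2*n-1).choose (n-1-i) = (2*n-1).choose (n+i) := by
      have h : (2*n-1) - (n+i) = n-1-i := by omega
      rw [← h, Nat.choose_symm (by omega)]
    have e2 : n+m-1-(n-1-i) = m+i := by omega
    rw [e1, e2]
    rfl
  rw [upper, lower]
  ring

/-- L7 : diagonal (rp,ro) sum -/
lemma L7 (n m K : ℕ) (hn : 1 ≤ n) (hm : 1 ≤ m) (hK : n + m + 1 ≤ K) :
    2 * ∑ i ∈ range K, rp n i * ro m i
      = ((2*(n+m)-2).choose (n+m-1) : ℚ) + rp n 0 * ro m 0 := by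
  have base : ((2*(n+m)-2).choose (n+m-1) : ℚ)
      = ∑ k ∈ range (n+m), ((2*n-2).choose k : ℚ) * ((2*m).choose (n+m-1-k) : ℚ) := by
    have h := vand (2*n-2) (2*m) (n+m-1)
    have e1 : (2*n-2) + (2*m) = 2*(n+m)-2 := by omega
    have e2 : (n+m-1)+1 = n+m := by omega
    rw [e1, e2] at h
    rw [h]
    push_cast
    rfl
  rw [base, split_range (n-1) (m+1) (n+m) (by omega)]
  have upper : ∑ i ∈ range (m+1), ((2*n-2).choose (n-1+i) : ℚ) * ((2*m).choose (n+m-1-(n-1+i)) : ℚ)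
      = ∑ i ∈ range K, rp n i * ro m i := by
    rw [pad_sum (m+1) K (by omega) (fun i => rp n i * ro m i)
      (fun i hi => by show rp n i * ro m i = 0; rw [ro_vanish m i hi]; ring)]
    apply Finset.sum_congr rfl
    intro i hi
    have hi' : i < m + 1 := Finset.mem_range.1 hi
    have e1 : (2*m).choose (n+m-1-(n-1+i)) = (2*m).choose (m+i) := by
      have h : (2*m) - (m+i) = n+m-1-(n-1+i) := by omega
      rw [← h, Nat.choose_symm (by omega)]
    rw [e1]
    rfl
  have lower : ∑ k ∈ range (n-1), ((2*n-2).choose k : ℚ) * ((2*m).choose (n+m-1-k) : ℚ)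
      = (∑ i ∈ range K, rp n i * ro m i) - rp n 0 * ro m 0 := by
    rw [← Finset.sum_range_reflect]
    have e : ∑ i ∈ range (n-1), ((2*n-2).choose (n-1-1-i) : ℚ) * ((2*m).choose (n+m-1-(n-1-1-i)) : ℚ)
        = ∑ i ∈ range (n-1), rp n (i+1) * ro m (i+1) := by
      apply Finset.sum_congr rfl
      intro i hi
      have hi' : i < n - 1 := Finset.mem_range.1 hi
      have e1 : (2*n-2).choose (n-1-1-i) = (2*n-2).choose (n-1+(i+1)) := by
        have h : (2*n-2) - (n-1+(i+1)) = n-1-1-i := by omega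
        rw [← h, Nat.choose_symm (by omega)]
      have e2 : n+m-1-(n-1-1-i) = m+(i+1) := by omega
      rw [e1, e2]
      rfl
    rw [e]
    have hpad := pad_sum (n-1) K (by omega) (fun i => rp n (i+1) * ro m (i+1))
      (fun i hi => by show rp n (i+1) * ro m (i+1) = 0; rw [rp_vanish n (i+1) hn (by omega)]; ring)
    rw [← hpad]
    have hsh := shift_sum K (fun i => rp n i * ro m i)
    have fK : rp n K * ro m K = 0 := by
      rw [rp_vanish n K hn (by omega)]; ring
    rw [fK] at hsh
    linarith
  rw [upper, lower]
  ring


/-! ### Wronskian telescope -/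

lemma wron_pt (n m : ℕ) (hn : 1 ≤ n) (hm : 1 ≤ m) (i : ℕ) :
    ((n:ℚ)+m) * (hf n i * hf m (i+1) - hf n (i+1) * hf m i)
      = ((m:ℚ)-n) * (hf n i * hf m i - hf n (i+1) * hf m (i+1)) := by
  rcases le_or_gt n i with h | h
  · rw [hf_vanish n i hn h, hf_vanish n (i+1) hn (by omega)]
    ring
  rcases le_or_gt m i with h' | h'
  · rw [hf_vanish m i hm h', hf_vanish m (i+1) hm (by omega)]
    ring
  · have d1 : ((n:ℚ)+i+1) ≠ 0 := by positivity
    have d2 : ((m:ℚ)+i+1) ≠ 0 := by positivity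
    have e1 : hf n (i+1) = ((n:ℚ)-1-i) * hf n i / ((n:ℚ)+i+1) := by
      rw [eq_div_iff d1]
      linear_combination hf_scaled n i hn
    have e2 : hf m (i+1) = ((m:ℚ)-1-i) * hf m i / ((m:ℚ)+i+1) := by
      rw [eq_div_iff d2]
      linear_combination hf_scaled m i hm
    rw [e1, e2]
    field_simp
    ring

lemma L10 (n m K : ℕ) (hn : 1 ≤ n) (hm : 1 ≤ m) (hK : n + m ≤ K) :
    ((n:ℚ)+m) * ((∑ i ∈ range K, hf n i * hf m (i+1)) - ∑ i ∈ range K, hf n (i+1) * hf m i)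
      = ((m:ℚ)-n) * (hf n 0 * hf m 0) := by
  have step : ∀ i ∈ range K,
      ((n:ℚ)+m) * (hf n i * hf m (i+1)) - ((n:ℚ)+m) * (hf n (i+1) * hf m i)
        = ((m:ℚ)-n) * ((fun t => hf n t * hf m t) i - (fun t => hf n t * hf m t) (i+1)) := by
    intro i _
    have := wron_pt n m hn hm i
    simp only
    linarith
  have tel := Finset.sum_range_sub' (fun t => ((m:ℚ)-n) * (hf n t * hf m t)) K
  calc ((n:ℚ)+m) * ((∑ i ∈ range K, hf n i * hf m (i+1)) - ∑ i ∈ range K, hf n (i+1) * hf m i)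
      = ∑ i ∈ range K, (((n:ℚ)+m) * (hf n i * hf m (i+1)) - ((n:ℚ)+m) * (hf n (i+1) * hf m i)) := by
        rw [Finset.sum_sub_distrib, ← Finset.mul_sum, ← Finset.mul_sum]
        ring
    _ = ∑ i ∈ range K, (((m:ℚ)-n) * (hf n i * hf m i) - ((m:ℚ)-n) * (hf n (i+1) * hf m (i+1))) := by
        apply Finset.sum_congr rfl
        intro i hi
        have := step i hi
        simp only at this ⊢
        linarith
    _ = ((m:ℚ)-n) * (hf n 0 * hf m 0) - ((m:ℚ)-n) * (hf n K * hf m K) := by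
        exact Finset.sum_range_sub' (fun t => ((m:ℚ)-n) * (hf n t * hf m t)) K
    _ = ((m:ℚ)-n) * (hf n 0 * hf m 0) := by
        rw [hf_vanish n K hn (by omega)]
        ring


/-! ### double sum reductions -/

section Sig

variable (p q K : ℕ)

-- step C and D, shared
lemma stepC (hp : 1 ≤ p) :
    ∑ t ∈ range K, (∑ i ∈ range (t+1), hf p i) * hf q t
      = (∑ j ∈ range K, (∑ i ∈ range j, hf p i) * hf q j)
        + ∑ i ∈ range K, hf p i * hf q i := by
  rw [← Finset.sum_add_distrib]
  apply Finset.sum_congr rfl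
  intro t _
  rw [Finset.sum_range_succ]
  ring

lemma stepD (hq : 1 ≤ q) (hK : q ≤ K) :
    ∑ t ∈ range K, (∑ i ∈ range (t+1), hf p i) * hf q (t+1)
      = ∑ j ∈ range K, (∑ i ∈ range j, hf p i) * hf q j := by
  have hsh := shift_sum K (fun j => (∑ i ∈ range j, hf p i) * hf q j)
  rw [Finset.sum_range_zero, hf_vanish q K hq (by omega)] at hsh
  simp at hsh
  linarith

lemma sig1 (hp : 1 ≤ p) (hq : 1 ≤ q) (hK : p + q + 2 ≤ K) :
    ∑ j ∈ range K, (∑ i ∈ range j, alphaWeight i * ro p i) * ro q j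
      = 4 * (∑ j ∈ range K, (∑ i ∈ range j, hf p i) * hf q j)
        + (∑ i ∈ range K, hf p i * hf q i)
        - ∑ i ∈ range K, hf p i * hf q (i+1) := by
  have hA : ∑ j ∈ range K, (∑ i ∈ range j, alphaWeight i * ro p i) * ro q j
      = ∑ t ∈ range K, (∑ i ∈ range (t+1), alphaWeight i * ro p i) * ro q (t+1) := by
    have hsh := shift_sum K (fun j => (∑ i ∈ range j, alphaWeight i * ro p i) * ro q j)
    rw [Finset.sum_range_zero, ro_vanish q K (by omega)] at hsh
    simp at hsh
    linarith
  rw [hA]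
  have hB : ∀ t ∈ range K,
      (∑ i ∈ range (t+1), alphaWeight i * ro p i) * ro q (t+1)
        = 2*((∑ i ∈ range (t+1), hf p i) * hf q t)
          + 2*((∑ i ∈ range (t+1), hf p i) * hf q (t+1))
          - hf p t * hf q t - hf p t * hf q (t+1) := by
    intro t _
    rw [I1 p hp t, ro_succ q t hq]
    ring
  rw [Finset.sum_congr rfl hB]
  rw [Finset.sum_sub_distrib, Finset.sum_sub_distrib, Finset.sum_add_distrib,
    ← Finset.mul_sum, ← Finset.mul_sum]
  rw [stepC p q K hp, stepD p q K hq (by omega)]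
  ring

lemma sig2 (hp : 1 ≤ p) (hq : 1 ≤ q) (hK : p + q + 2 ≤ K) :
    ∑ j ∈ range K, (∑ i ∈ range j, alphaWeight i * ro p i) * rp q j
      = ∑ j ∈ range K, (∑ i ∈ range j, hf p i) * hf q j := by
  have hA : ∑ j ∈ range K, (∑ i ∈ range j, alphaWeight i * ro p i) * rp q j
      = ∑ t ∈ range K, (∑ i ∈ range (t+1), alphaWeight i * ro p i) * rp q (t+1) := by
    have hsh := shift_sum K (fun j => (∑ i ∈ range j, alphaWeight i * ro p i) * rp q j)
    rw [Finset.sum_range_zero, rp_vanish q K hq (by omega)] at hsh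
    simp at hsh
    linarith
  rw [hA]
  have hB : ∀ t ∈ range K,
      (∑ i ∈ range (t+1), alphaWeight i * ro p i) * rp q (t+1)
        = 2*((∑ i ∈ range (t+1), hf p i) * rp q (t+1)) - hf p t * rp q (t+1) := by
    intro t _
    rw [I1 p hp t]
    ring
  rw [Finset.sum_congr rfl hB]
  rw [Finset.sum_sub_distrib, ← Finset.mul_sum]
  -- now : 2*X - Y with X := ∑ C(t+1) rp q (t+1), Y := ∑ hf p t rp q (t+1)
  -- E = X + (X - Y)
  have hE : ∑ j ∈ range K, (∑ i ∈ range j, hf p i) * hf q j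
      = (∑ t ∈ range K, (∑ i ∈ range (t+1), hf p i) * rp q (t+1))
        + ((∑ t ∈ range K, (∑ i ∈ range (t+1), hf p i) * rp q (t+1))
            - ∑ t ∈ range K, hf p t * rp q (t+1)) := by
    have e1 : ∀ j ∈ range K, (∑ i ∈ range j, hf p i) * hf q j
        = (∑ i ∈ range j, hf p i) * rp q j + (∑ i ∈ range j, hf p i) * rp q (j+1) := by
      intro j _
      rw [hf_eq q j hq]
      ring
    rw [Finset.sum_congr rfl e1, Finset.sum_add_distrib]
    have hZ : ∑ j ∈ range K, (∑ i ∈ range j, hf p i) * rp q j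
        = ∑ t ∈ range K, (∑ i ∈ range (t+1), hf p i) * rp q (t+1) := by
      have hsh := shift_sum K (fun j => (∑ i ∈ range j, hf p i) * rp q j)
      rw [Finset.sum_range_zero, rp_vanish q K hq (by omega)] at hsh
      simp at hsh
      linarith
    have hZ' : ∑ j ∈ range K, (∑ i ∈ range j, hf p i) * rp q (j+1)
        = (∑ t ∈ range K, (∑ i ∈ range (t+1), hf p i) * rp q (t+1))
          - ∑ t ∈ range K, hf p t * rp q (t+1) := by
      rw [← Finset.sum_sub_distrib]
      apply Finset.sum_congr rfl
      intro t _
      rw [Finset.sum_range_succ]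
      ring
    rw [hZ, hZ']
  rw [hE]
  ring

lemma sig3 (hp : 1 ≤ p) (hq : 1 ≤ q) (hK : p + q + 2 ≤ K) :
    ∑ j ∈ range K, (∑ i ∈ range j, alphaWeight i * rp p i) * ro q j
      = (∑ j ∈ range K, (∑ i ∈ range j, hf p i) * hf q j)
        + (∑ i ∈ range K, hf p i * hf q i) / 2
        - (∑ i ∈ range K, rp p i * ro q i) / 2
        + rp p 0 * ro q 0 / 2 := by
  have hA : ∑ j ∈ range K, (∑ i ∈ range j, alphaWeight i * rp p i) * ro q j
      = ∑ t ∈ range K, (∑ i ∈ range (t+1), alphaWeight i * rp p i) * ro q (t+1) := by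
    have hsh := shift_sum K (fun j => (∑ i ∈ range j, alphaWeight i * rp p i) * ro q j)
    rw [Finset.sum_range_zero, ro_vanish q K (by omega)] at hsh
    simp at hsh
    linarith
  rw [hA]
  have hB : ∀ t ∈ range K,
      (∑ i ∈ range (t+1), alphaWeight i * rp p i) * ro q (t+1)
        = ((∑ i ∈ range (t+1), hf p i) * hf q t) / 2
          + ((∑ i ∈ range (t+1), hf p i) * hf q (t+1)) / 2
          - (rp p (t+1) * (hf q t + hf q (t+1))) / 2 := by
    intro t _
    have h1 := alpha_split t (fun i => rp p i)
    have h2 := I2 p hp t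
    rw [h1, ro_succ q t hq]
    have : ∑ i ∈ range (t+1), rp p i
        = ((∑ i ∈ range (t+1), hf p i) + rp p 0 - rp p (t+1)) / 2 := by linarith
    rw [this]
    ring
  rw [Finset.sum_congr rfl hB]
  rw [Finset.sum_sub_distrib, Finset.sum_add_distrib]
  have c1 : ∑ t ∈ range K, ((∑ i ∈ range (t+1), hf p i) * hf q t) / 2
      = (∑ t ∈ range K, (∑ i ∈ range (t+1), hf p i) * hf q t) / 2 := by
    rw [Finset.sum_div]
  have c2 : ∑ t ∈ range K, ((∑ i ∈ range (t+1), hf p i) * hf q (t+1)) / 2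
      = (∑ t ∈ range K, (∑ i ∈ range (t+1), hf p i) * hf q (t+1)) / 2 := by
    rw [Finset.sum_div]
  have c3 : ∑ t ∈ range K, (rp p (t+1) * (hf q t + hf q (t+1))) / 2
      = (∑ t ∈ range K, rp p (t+1) * ro q (t+1)) / 2 := by
    rw [Finset.sum_div]
    apply Finset.sum_congr rfl
    intro t _
    rw [ro_succ q t hq]
  have c4 : ∑ t ∈ range K, rp p (t+1) * ro q (t+1)
      = (∑ i ∈ range K, rp p i * ro q i) - rp p 0 * ro q 0 := by
    have hsh := shift_sum K (fun i => rp p i * ro q i)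
    rw [rp_vanish p K hp (by omega)] at hsh
    simp at hsh
    linarith
  rw [c1, c2, c3, c4, stepC p q K hp, stepD p q K hq (by omega)]
  ring

end Sig


lemma cc2 (a b a' b' : ℕ) (ha : a = a') (hb : b = b') :
    (a.choose b : ℚ) = (a'.choose b' : ℚ) := by subst ha; subst hb; rfl

end KSaux

open Finset KSaux in
/-- Lemma 7.2 (Lemma 1) of Krattenthaler–Schneider. -/
theorem abs_double_sum_decomposition (m n : ℕ) (hm : 1 ≤ m) (hn : 1 ≤ n) :
    ∑ i ∈ Finset.range (n + 1), ∑ j ∈ Finset.range (m + 1),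
      alphaWeight i * alphaWeight j * |(j : ℚ) ^ 2 - (i : ℚ) ^ 2| *
        ((2 * n).choose (n + i) : ℚ) * ((2 * m).choose (m + j) : ℚ)
    = ((n : ℚ) * (m : ℚ) / 2) * ((2 * n).choose n : ℚ) * ((2 * m).choose m : ℚ)
      + 2 * ((m : ℚ) - (n : ℚ)) *
          ∑ j ∈ Finset.Icc 1 (n + m), ∑ i ∈ Finset.range j,
            alphaWeight i *
              (((2 * n).choose (n + i) : ℚ) * ((2 * m - 2).choose (m + j - 1) : ℚ)
                - ((2 * n - 2).choose (n + j - 1) : ℚ) * ((2 * m).choose (m + i) : ℚ)) := by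
  set K := n + m + 2 with hKdef
  -- the generic term
  set F : ℕ → ℕ → ℚ := fun i j =>
    alphaWeight i * alphaWeight j * |(j : ℚ) ^ 2 - (i : ℚ) ^ 2| * ro n i * ro m j with hF
  -- Step 1 : the LHS as a full K × K grid sum
  have stepLHS1 :
      (∑ i ∈ Finset.range (n + 1), ∑ j ∈ Finset.range (m + 1),
        alphaWeight i * alphaWeight j * |(j : ℚ) ^ 2 - (i : ℚ) ^ 2| *
          ((2 * n).choose (n + i) : ℚ) * ((2 * m).choose (m + j) : ℚ))
      = ∑ j ∈ range K, ∑ i ∈ range K, F i j := by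
    rw [Finset.sum_comm]
    rw [pad_sum (m+1) K (by omega) (fun j => ∑ i ∈ range K, F i j)
      (fun j hj => Finset.sum_eq_zero (fun i _ => by
        show alphaWeight i * alphaWeight j * _ * ro n i * ro m j = 0
        rw [ro_vanish m j (by omega)]; ring))]
    apply Finset.sum_congr rfl
    intro j _
    rw [pad_sum (n+1) K (by omega) (fun i => F i j)
      (fun i hi => by
        show alphaWeight i * alphaWeight j * _ * ro n i * ro m j = 0
        rw [ro_vanish n i (by omega)]; ring)]
    apply Finset.sum_congr rfl
    intro i _
    rfl
  -- Step 2 : grid to triangle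
  have stepLHS2 : ∑ j ∈ range K, ∑ i ∈ range K, F i j
      = ∑ j ∈ range K, ∑ i ∈ range j, (F i j + F j i) := by
    rw [square_triangle K F]
    have hdiag : ∑ i ∈ range K, F i i = 0 := by
      apply Finset.sum_eq_zero
      intro i _
      show alphaWeight i * alphaWeight i * |(i : ℚ) ^ 2 - (i : ℚ) ^ 2| * ro n i * ro m i = 0
      rw [sub_self, abs_zero]; ring
    rw [hdiag, add_zero]
  -- Step 3 : pointwise split on the triangle
  have key_pt : ∀ j ∈ range K, ∀ i ∈ range j, F i j + F j i
      = ((m:ℚ)^2-(n:ℚ)^2) * ((alphaWeight i * ro n i) * ro m j)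
        - ((m:ℚ)^2-(n:ℚ)^2) * ((alphaWeight i * ro m i) * ro n j)
        - 2*(m:ℚ)*(2*(m:ℚ)-1) * ((alphaWeight i * ro n i) * rp m j)
        + 2*(m:ℚ)*(2*(m:ℚ)-1) * ((alphaWeight i * rp m i) * ro n j)
        + 2*(n:ℚ)*(2*(n:ℚ)-1) * ((alphaWeight i * rp n i) * ro m j)
        - 2*(n:ℚ)*(2*(n:ℚ)-1) * ((alphaWeight i * ro m i) * rp n j) := by
    intro j hj i hi
    have hij : i < j := Finset.mem_range.1 hi
    have hj1 : alphaWeight j = 1 := by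
      unfold alphaWeight
      simp [show j ≠ 0 by omega]
    have hcast : (i:ℚ) ≤ (j:ℚ) := Nat.cast_le.2 (le_of_lt hij)
    have hi0 : (0:ℚ) ≤ (i:ℚ) := Nat.cast_nonneg i
    have habs1 : |(j : ℚ) ^ 2 - (i : ℚ) ^ 2| = (j : ℚ) ^ 2 - (i : ℚ) ^ 2 := by
      apply abs_of_nonneg
      nlinarith
    have habs2 : |(i : ℚ) ^ 2 - (j : ℚ) ^ 2| = (j : ℚ) ^ 2 - (i : ℚ) ^ 2 := by
      rw [abs_sub_comm]
      exact habs1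
    show alphaWeight i * alphaWeight j * |(j : ℚ) ^ 2 - (i : ℚ) ^ 2| * ro n i * ro m j
        + alphaWeight j * alphaWeight i * |(i : ℚ) ^ 2 - (j : ℚ) ^ 2| * ro n j * ro m i = _
    rw [hj1, habs1, habs2]
    have hmj := K1 m j hm
    have hmi := K1 m i hm
    have hni := K1 n i hn
    have hnj := K1 n j hn
    linear_combination (-(alphaWeight i * ro n i)) * hmj
      + (alphaWeight i * ro m j) * hni
      + (alphaWeight i * ro n j) * hmi
      - (alphaWeight i * ro m i) * hnj
  -- Step 4 : split the triangle sum into the six double sums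
  have stepLHS3 : ∑ j ∈ range K, ∑ i ∈ range j, (F i j + F j i)
      = ((m:ℚ)^2-(n:ℚ)^2) * (∑ j ∈ range K, (∑ i ∈ range j, alphaWeight i * ro n i) * ro m j)
        - ((m:ℚ)^2-(n:ℚ)^2) * (∑ j ∈ range K, (∑ i ∈ range j, alphaWeight i * ro m i) * ro n j)
        - 2*(m:ℚ)*(2*(m:ℚ)-1) * (∑ j ∈ range K, (∑ i ∈ range j, alphaWeight i * ro n i) * rp m j)
        + 2*(m:ℚ)*(2*(m:ℚ)-1) * (∑ j ∈ range K, (∑ i ∈ range j, alphaWeight i * rp m i) * ro n j)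
        + 2*(n:ℚ)*(2*(n:ℚ)-1) * (∑ j ∈ range K, (∑ i ∈ range j, alphaWeight i * rp n i) * ro m j)
        - 2*(n:ℚ)*(2*(n:ℚ)-1) * (∑ j ∈ range K, (∑ i ∈ range j, alphaWeight i * ro m i) * rp n j) := by
    rw [Finset.sum_congr rfl (fun j hj => Finset.sum_congr rfl (fun i hi => key_pt j hj i hi))]
    simp only [Finset.sum_add_distrib, Finset.sum_sub_distrib, ← Finset.mul_sum,
      ← Finset.sum_mul]
  -- Step 5 : RHS double sum on the triangle
  have stepRHS : (∑ j ∈ Finset.Icc 1 (n + m), ∑ i ∈ Finset.range j,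
        alphaWeight i *
          (((2 * n).choose (n + i) : ℚ) * ((2 * m - 2).choose (m + j - 1) : ℚ)
            - ((2 * n - 2).choose (n + j - 1) : ℚ) * ((2 * m).choose (m + i) : ℚ)))
      = (∑ j ∈ range K, (∑ i ∈ range j, alphaWeight i * ro n i) * rp m j)
        - ∑ j ∈ range K, (∑ i ∈ range j, alphaWeight i * ro m i) * rp n j := by
    have conv1 : ∀ j, (∑ i ∈ Finset.range j,
        alphaWeight i *
          (((2 * n).choose (n + i) : ℚ) * ((2 * m - 2).choose (m + j - 1) : ℚ)
            - ((2 * n - 2).choose (n + j - 1) : ℚ) * ((2 * m).choose (m + i) : ℚ)))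
        = (∑ i ∈ range j, alphaWeight i * ro n i) * rp m j
          - (∑ i ∈ range j, alphaWeight i * ro m i) * rp n j := by
      intro j
      rw [Finset.sum_mul, Finset.sum_mul, ← Finset.sum_sub_distrib]
      apply Finset.sum_congr rfl
      intro i _
      unfold ro rp
      rw [cc2 (2*m-2) (m+j-1) (2*m-2) (m-1+j) rfl (by omega),
        cc2 (2*n-2) (n+j-1) (2*n-2) (n-1+j) rfl (by omega)]
      ring
    have hsub : Finset.Icc 1 (n+m) ⊆ range K := by
      intro x hx
      simp only [Finset.mem_Icc] at hx
      exact Finset.mem_range.2 (by omega)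
    rw [← Finset.sum_sub_distrib]
    rw [← Finset.sum_subset hsub (fun j hj hnj => ?_)]
    · apply Finset.sum_congr rfl
      intro j _
      rw [conv1 j]
    · -- j ∈ range K but j ∉ Icc 1 (n+m) : j = 0 or j = n+m+1
      simp only [Finset.mem_Icc, not_and, not_le] at hnj
      have hjr : j < K := Finset.mem_range.1 hj
      rcases Nat.eq_zero_or_pos j with h0 | h0
      · subst h0
        simp
      · have hj2 : j = n+m+1 := by omega
        rw [rp_vanish m j hm (by omega), rp_vanish n j hn (by omega)]
        ring
  -- assemble
  rw [stepLHS1, stepLHS2, stepLHS3, stepRHS]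
  -- six sig rewrites
  rw [sig1 n m K hn hm (by omega), sig1 m n K hm hn (by omega),
      sig2 n m K hn hm (by omega), sig2 m n K hm hn (by omega),
      sig3 n m K hn hm (by omega), sig3 m n K hm hn (by omega)]
  -- commutation normalizations
  have dcomm : ∑ i ∈ range K, hf m i * hf n i = ∑ i ∈ range K, hf n i * hf m i :=
    Finset.sum_congr rfl (fun i _ => mul_comm _ _)
  have mcomm : ∑ i ∈ range K, hf m i * hf n (i+1) = ∑ i ∈ range K, hf n (i+1) * hf m i :=
    Finset.sum_congr rfl (fun i _ => mul_comm _ _)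
  rw [dcomm, mcomm]
  -- evaluations
  have r1 := L5 n m K hn hm (by omega)
  have r2 := L7 n m K hn hm (by omega)
  have r3' := L7 m n K hm hn (by omega)
  have r3 : 2 * ∑ i ∈ range K, rp m i * ro n i
      = ((2*(n+m)-2).choose (n+m-1) : ℚ) + rp m 0 * ro n 0 := by
    rw [r3', cc2 (2*(m+n)-2) (m+n-1) (2*(n+m)-2) (n+m-1) (by omega) (by omega)]
  have r4 := L10 n m K hn hm (by omega)
  have r5 := ro_zero n hn
  have r6 := ro_zero m hm
  have r7 : (n:ℚ)^2 * ro n 0 = 2*(n:ℚ)*(2*(n:ℚ)-1) * rp n 0 := by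
    have := K1 n 0 hn
    simpa using this
  have r8 : (m:ℚ)^2 * ro m 0 = 2*(m:ℚ)*(2*(m:ℚ)-1) * rp m 0 := by
    have := K1 m 0 hm
    simpa using this
  have hro : ((2 * n).choose n : ℚ) = ro n 0 := by unfold ro; rw [cc2 (2*n) n (2*n) (n+0) rfl (by omega)]
  have hrom : ((2 * m).choose m : ℚ) = ro m 0 := by unfold ro; rw [cc2 (2*m) m (2*m) (m+0) rfl (by omega)]
  rw [hro, hrom]
  linear_combination ((m*(2*(m:ℚ)-1)+n*(2*(n:ℚ)-1))/2) * r1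
    + (-(n*(2*(n:ℚ)-1))/2) * r2
    + (-(m*(2*(m:ℚ)-1))/2) * r3
    + (-((m:ℚ)-n)) * r4
    + (((m:ℚ)-n)^2 * (ro m 0)/4) * r5
    + (((m:ℚ)-n)^2 * (hf n 0)/2) * r6
    + (-(ro m 0)/4) * r7
    + (-(ro n 0)/4) * r8
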